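/- Let g = ⨁_{k≥−1} g_k be a Z-graded Lie superalgebra with associated Casimir space g_{−1}. Define, inside a differential-graded context with differential d = ad K where K ∈ g₁ is odd with [K,K] = 0: Z^k = ker(d|_{g_k}), B^k = d(g_{k−1}), and inductively EZ^{−1} = 0, EZ^k = {z ∈ Z^k : [z, Z^{−1}] ⊆ EZ^{k−1}}. Then: (a) the essential elements EW = ⨁_k EW_k, where EW_k = {P ∈ g_k : [⋯[[P,C₀],C₁],…,C_k] = 0 for all C₀,…,C_k ∈ Z^{−1}}, form a Z-graded subalgebra of g; (b) every exact element is essentially closed, i.e., B^k ⊆ Z^k ∩ EW_k for all k. -/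

import Mathlib

/-- Iterated bracket `[⋯[[a,C₀],C₁],…,C_k]`. -/
def iterBr {L : Type} (B : L → L → L) (a : L) (C : ℕ → L) : ℕ → L
  | 0 => B a (C 0)
  | n + 1 => B (iterBr B a C n) (C (n + 1))

/-- An element `P ∈ g_k` (`k ≥ 0`) is essential (relative to the Hamiltonian `K`) if
all iterated brackets `[⋯[[P,C₀],C₁],…,C_k]` with `C₀,…,C_k` Casimirs (elements of
`Z^{−1} = {C ∈ g_{−1} : [K,C] = 0}`) vanish. -/
def Essential {C L : Type} [Field C] [AddCommGroup L] [Module C L]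
    (g : ℤ → Submodule C L) (B : L → L → L) (K : L) (k : ℕ) (P : L) : Prop :=
  P ∈ g (k : ℤ) ∧
    ∀ Cs : ℕ → L, (∀ n, Cs n ∈ g (-1) ∧ B K (Cs n) = 0) → iterBr B P Cs k = 0

section Helpers

variable {F L : Type} [Field F] [AddCommGroup L] [Module F L]
  (g : ℤ → Submodule F L) (B : L → L → L) (K : L)

/-- `Dies t P` : bracketing `P` with any `t` Casimirs gives `0`. -/
def Dies : ℕ → L → Prop
  | 0, P => P = 0
  | t + 1, P => ∀ Cl : L, Cl ∈ g (-1) → B K Cl = 0 → Dies t (B P Cl)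

variable (hB_addl : ∀ x y z : L, B (x + y) z = B x z + B y z)
  (hB_addr : ∀ x y z : L, B x (y + z) = B x y + B x z)

include hB_addl in
lemma B_zero_left (z : L) : B 0 z = 0 := by
  have h := hB_addl 0 0 z
  simp only [add_zero] at h
  exact (left_eq_add.mp h)

include hB_addr in
lemma B_zero_right (z : L) : B z 0 = 0 := by
  have h := hB_addr z 0 0
  simp only [add_zero] at h
  exact (left_eq_add.mp h)

include hB_addl in
lemma B_neg_left (x y : L) : B (-x) y = -(B x y) := by
  have h := hB_addl x (-x) y
  rw [add_neg_cancel, B_zero_left B hB_addl] at h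
  exact eq_neg_of_add_eq_zero_right h.symm

include hB_addl in
lemma Dies_zero : ∀ t : ℕ, Dies g B K t (0 : L)
  | 0 => rfl
  | t + 1 => by
    intro Cl _ _
    rw [B_zero_left B hB_addl]
    exact Dies_zero t

include hB_addl in
lemma Dies_add : ∀ (t : ℕ) (P Q : L), Dies g B K t P → Dies g B K t Q →
    Dies g B K t (P + Q)
  | 0, P, Q, hP, hQ => by simp only [Dies] at *; rw [hP, hQ, add_zero]
  | t + 1, P, Q, hP, hQ => by
    intro Cl h1 h2
    rw [hB_addl]
    exact Dies_add t _ _ (hP Cl h1 h2) (hQ Cl h1 h2)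

include hB_addl in
lemma Dies_neg : ∀ (t : ℕ) (P : L), Dies g B K t P → Dies g B K t (-P)
  | 0, P, hP => by simp only [Dies] at *; rw [hP, neg_zero]
  | t + 1, P, hP => by
    intro Cl h1 h2
    rw [B_neg_left B hB_addl]
    exact Dies_neg t _ (hP Cl h1 h2)

variable (hgrad : ∀ (p q : ℤ) (x y : L), x ∈ g p → y ∈ g q → B x y ∈ g (p + q))
  (hJac : ∀ (p q : ℤ) (x y z : L), x ∈ g p → y ∈ g q →
    B x (B y z) = B (B x y) z + (if Even (p * q) then B y (B x z) else -B y (B x z)))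

include hB_addl hB_addr hgrad hJac in
/-- Key lemma for part (a): if `P` dies in `s+1` steps and `Q` in `t+1` steps, then
`[P,Q]` dies in `s+t+1` steps. -/
lemma Dies_bracket : ∀ (N s t : ℕ) (p q : ℤ) (P Q : L), s + t ≤ N →
    P ∈ g p → Q ∈ g q → Dies g B K (s + 1) P → Dies g B K (t + 1) Q →
    Dies g B K (s + t + 1) (B P Q) := by
  intro N
  induction N with
  | zero =>
    intro s t p q P Q hst hPg hQg hP hQ
    obtain ⟨hs, ht⟩ : s = 0 ∧ t = 0 := by omega
    subst hs; subst ht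
    intro Cl h1 h2
    have hQC : B Q Cl = 0 := hQ Cl h1 h2
    have hPC : B P Cl = 0 := hP Cl h1 h2
    have hj := hJac p q P Q Cl hPg hQg
    rw [hQC, hPC, B_zero_right B hB_addr, B_zero_right B hB_addr] at hj
    simp only [neg_zero, ite_self, add_zero, zero_add] at hj
    exact hj.symm
  | succ N IH =>
    intro s t p q P Q hst hPg hQg hP hQ
    intro Cl h1 h2
    -- goal : Dies (s+t) (B (B P Q) Cl)
    have hj := hJac p q P Q Cl hPg hQg
    -- B P (B Q Cl) = B (B P Q) Cl + ε
    have key : B (B P Q) Cl = B P (B Q Cl) +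
        -(if Even (p * q) then B Q (B P Cl) else -B Q (B P Cl)) := by
      rw [hj]; abel
    rw [key]
    have hT1 : Dies g B K (s + t) (B P (B Q Cl)) := by
      cases t with
      | zero =>
        have : B Q Cl = 0 := hQ Cl h1 h2
        rw [this, B_zero_right B hB_addr]
        exact Dies_zero g B K hB_addl _
      | succ t' =>
        have hQC : Dies g B K (t' + 1) (B Q Cl) := hQ Cl h1 h2
        have hmem : B Q Cl ∈ g (q + (-1)) := hgrad q (-1) Q Cl hQg h1
        have := IH s t' p (q + (-1)) P (B Q Cl) (by omega) hPg hmem hP hQC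
        have heq : s + t' + 1 = s + (t' + 1) := by omega
        rwa [heq] at this
    have hT2 : Dies g B K (s + t) (B Q (B P Cl)) := by
      cases s with
      | zero =>
        have : B P Cl = 0 := hP Cl h1 h2
        rw [this, B_zero_right B hB_addr]
        exact Dies_zero g B K hB_addl _
      | succ s' =>
        have hPC : Dies g B K (s' + 1) (B P Cl) := hP Cl h1 h2
        have hmem : B P Cl ∈ g (p + (-1)) := hgrad p (-1) P Cl hPg h1
        have := IH t s' q (p + (-1)) Q (B P Cl) (by omega) hQg hmem hQ hPC
        have heq : t + s' + 1 = s' + 1 + t := by omega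
        rwa [heq] at this
    refine Dies_add g B K hB_addl _ _ _ hT1 (Dies_neg g B K hB_addl _ _ ?_)
    split <;> [exact hT2; exact Dies_neg g B K hB_addl _ _ hT2]

/-- Shift lemma for `iterBr`. -/
lemma iterBr_shift (Cs : ℕ → L) (P : L) :
    ∀ n, iterBr B P Cs (n + 1) = iterBr B (B P (Cs 0)) (fun i => Cs (i + 1)) n
  | 0 => rfl
  | n + 1 => by
    show B (iterBr B P Cs (n + 1)) (Cs (n + 2)) = _
    rw [iterBr_shift Cs P n]
    rfl

include hB_addl in
lemma Dies_iterBr : ∀ (n : ℕ) (P : L), Dies g B K (n + 1) P →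
    ∀ Cs : ℕ → L, (∀ m, Cs m ∈ g (-1) ∧ B K (Cs m) = 0) → iterBr B P Cs n = 0
  | 0, P, hP, Cs, hCs => hP (Cs 0) (hCs 0).1 (hCs 0).2
  | n + 1, P, hP, Cs, hCs => by
    rw [iterBr_shift B Cs P n]
    exact Dies_iterBr n (B P (Cs 0)) (hP (Cs 0) (hCs 0).1 (hCs 0).2)
      (fun i => Cs (i + 1)) (fun m => hCs (m + 1))

lemma iterBr_Dies : ∀ (n : ℕ) (P : L),
    (∀ Cs : ℕ → L, (∀ m, Cs m ∈ g (-1) ∧ B K (Cs m) = 0) → iterBr B P Cs n = 0) →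
    Dies g B K (n + 1) P
  | 0, P, h => by
    intro Cl h1 h2
    exact h (fun _ => Cl) (fun _ => ⟨h1, h2⟩)
  | n + 1, P, h => by
    intro Cl h1 h2
    refine iterBr_Dies n (B P Cl) (fun Cs hCs => ?_)
    have h' := h (fun i => Nat.rec Cl (fun j _ => Cs j) i)
      (by intro m; cases m with
          | zero => exact ⟨h1, h2⟩
          | succ m' => exact hCs m')
    rw [iterBr_shift] at h'
    exact h'

include hgrad in
lemma iterBr_mem (Cs : ℕ → L) (hCs : ∀ m, Cs m ∈ g (-1)) :
    ∀ (n : ℕ) (p : ℤ) (P : L), P ∈ g p → iterBr B P Cs n ∈ g (p - (n + 1))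
  | 0, p, P, hP => by
    have := hgrad p (-1) P (Cs 0) hP (hCs 0)
    show B P (Cs 0) ∈ g (p - (((0 : ℕ) : ℤ) + 1))
    have heq : p + -1 = p - (((0 : ℕ) : ℤ) + 1) := by push_cast; ring
    rwa [heq] at this
  | n + 1, p, P, hP => by
    have h1 := iterBr_mem Cs hCs n p P hP
    have := hgrad (p - (n + 1)) (-1) _ (Cs (n + 1)) h1 (hCs (n + 1))
    have heq : p - (↑n + 1) + (-1) = p - (↑(n + 1) + 1) := by push_cast; ring
    rwa [heq] at this

end Helpers

theorem stmt_14 {C L : Type} [Field C] [CharZero C] [AddCommGroup L] [Module C L]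
    (g : ℤ → Submodule C L) (B : L → L → L)
    (hB_addl : ∀ x y z : L, B (x + y) z = B x z + B y z)
    (hB_addr : ∀ x y z : L, B x (y + z) = B x y + B x z)
    (hgrad : ∀ (p q : ℤ) (x y : L), x ∈ g p → y ∈ g q → B x y ∈ g (p + q))
    (hbot : ∀ k : ℤ, k < -1 → g k = ⊥)
    (hskew : ∀ (p q : ℤ) (x y : L), x ∈ g p → y ∈ g q →
      B x y = if Even (p * q) then -B y x else B y x)
    (hJac : ∀ (p q : ℤ) (x y z : L), x ∈ g p → y ∈ g q →
      B x (B y z) = B (B x y) z + (if Even (p * q) then B y (B x z) else -B y (B x z)))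
    (hmm : ∀ x y : L, x ∈ g (-1) → y ∈ g (-1) → B x y = 0)
    (K : L) (hK : K ∈ g 1) (hKK : B K K = 0) :
    (∀ (h k : ℕ) (P Q : L), Essential g B K h P → Essential g B K k Q →
      Essential g B K (h + k) (B P Q)) ∧
    (∀ (k : ℕ) (P : L), P ∈ g ((k : ℤ) - 1) →
      B K (B K P) = 0 ∧ Essential g B K k (B K P)) := by
  constructor
  · -- part (a)
    intro h k P Q hP hQ
    refine ⟨?_, ?_⟩
    · have := hgrad h k P Q hP.1 hQ.1
      have heq : (h : ℤ) + k = ((h + k : ℕ) : ℤ) := by push_cast; ring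
      rwa [heq] at this
    · have hPD : Dies g B K (h + 1) P := iterBr_Dies g B K h P hP.2
      have hQD : Dies g B K (k + 1) Q := iterBr_Dies g B K k Q hQ.2
      have := Dies_bracket g B K hB_addl hB_addr hgrad hJac (h + k) h k h k P Q
        le_rfl hP.1 hQ.1 hPD hQD
      exact Dies_iterBr g B K hB_addl (h + k) (B P Q) this
  · -- part (b)
    intro k P hP
    have hdd : B K (B K P) = 0 := by
      have hj := hJac 1 1 K K P hK hK
      rw [hKK, B_zero_left B hB_addl] at hj
      simp only [mul_one, Int.even_iff] at hj
      norm_num at hj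
      -- hj : B K (B K P) = -B K (B K P)
      have h2 : B K (B K P) + B K (B K P) = 0 :=
        eq_neg_iff_add_eq_zero.mp hj
      have h3 : (2 : C) • B K (B K P) = 0 := by rw [two_smul]; exact h2
      have := smul_eq_zero.mp h3
      rcases this with h | h
      · exact absurd h (by norm_num)
      · exact h
    refine ⟨hdd, ?_, ?_⟩
    · have := hgrad 1 ((k : ℤ) - 1) K P hK hP
      have heq : (1 : ℤ) + ((k : ℤ) - 1) = (k : ℤ) := by ring
      rwa [heq] at this
    · intro Cs hCs
      -- iterBr B (B K P) Cs k = B K (iterBr B P Cs k)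
      have comm : ∀ (n : ℕ) (q : ℤ) (R : L), R ∈ g q →
          iterBr B (B K R) Cs n = B K (iterBr B R Cs n) := by
        intro n
        induction n with
        | zero =>
          intro q R hR
          have hj := hJac 1 q K R (Cs 0) hK hR
          rw [(hCs 0).2, B_zero_right B hB_addr] at hj
          simp only [neg_zero, ite_self, add_zero] at hj
          exact hj.symm
        | succ n ih =>
          intro q R hR
          show B (iterBr B (B K R) Cs n) (Cs (n + 1)) = _
          rw [ih q R hR]
          have hmem : iterBr B R Cs n ∈ g (q - (n + 1)) :=
            iterBr_mem g B hgrad Cs (fun m => (hCs m).1) n q R hR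
          have hj := hJac 1 (q - (n + 1)) K (iterBr B R Cs n) (Cs (n + 1)) hK hmem
          rw [(hCs (n + 1)).2, B_zero_right B hB_addr] at hj
          simp only [neg_zero, ite_self, add_zero] at hj
          exact hj.symm
      rw [comm k ((k : ℤ) - 1) P hP]
      have hmem : iterBr B P Cs k ∈ g ((k : ℤ) - 1 - (k + 1)) :=
        iterBr_mem g B hgrad Cs (fun m => (hCs m).1) k ((k : ℤ) - 1) P hP
      have hz : iterBr B P Cs k = 0 := by
        have hb : g ((k : ℤ) - 1 - (k + 1)) = ⊥ := hbot _ (by omega)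
        rw [hb] at hmem
        simpa using hmem
      rw [hz, B_zero_right B hB_addr]
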